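/- Let M* ∈ ℝ^{d×T} have rank r with M* = B α where B ∈ ℝ^{d×r} has orthonormal columns, let M̂ ∈ ℝ^{d×T}, let M̃ = B̃ α̃ be a best rank-r Frobenius approximation of M̂ with B̃ᵀB̃ = I_r, and set ν = r · λ_r(M* M*ᵀ / T). Then sin²θ(B, B̃) ≤ 4 r ‖M̂ − M*‖_F² / (T ν). -/

import Mathlib

open Matrix MeasureTheory

noncomputable def nuclearNorm {d T : ℕ} (A : Matrix (Fin d) (Fin T) ℝ) : ℝ :=
  ∑ i, Real.sqrt ((Matrix.isHermitian_conjTranspose_mul_self A).eigenvalues i)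

noncomputable def frobNorm {d T : ℕ} (A : Matrix (Fin d) (Fin T) ℝ) : ℝ :=
  Real.sqrt (∑ i, ∑ j, (A i j) ^ 2)

noncomputable def opNorm {m n : ℕ} (A : Matrix (Fin m) (Fin n) ℝ) : ℝ :=
  ‖LinearMap.toContinuousLinearMap (Matrix.toEuclideanLin A)‖

noncomputable def minEig {n : ℕ} (A : Matrix (Fin n) (Fin n) ℝ) (hA : A.IsHermitian) : ℝ :=
  ⨅ i, hA.eigenvalues i

noncomputable def colNorm {d T : ℕ} (A : Matrix (Fin d) (Fin T) ℝ) (t : Fin T) : ℝ :=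
  Real.sqrt (∑ i, (A i t) ^ 2)

/-- `sin θ(B, B̃)`: sine of the largest principal angle between column spaces,
equal to the operator norm of `(I - B̃ B̃ᵀ) B`. -/
noncomputable def sinTheta {d r : ℕ} (B Bt : Matrix (Fin d) (Fin r) ℝ) : ℝ :=
  opNorm ((1 - Bt * Btᵀ) * B)

namespace MetaAux

lemma frobNorm_nonneg {d T : ℕ} (A : Matrix (Fin d) (Fin T) ℝ) : 0 ≤ frobNorm A :=
  Real.sqrt_nonneg _

lemma trace_transpose_mul_self_nonneg {m n : ℕ} (M : Matrix (Fin m) (Fin n) ℝ) :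
    0 ≤ (Mᵀ * M).trace := by
  rw [Matrix.trace]
  refine Finset.sum_nonneg fun j _ => ?_
  simp only [Matrix.diag_apply, Matrix.mul_apply, Matrix.transpose_apply]
  exact Finset.sum_nonneg fun i _ => mul_self_nonneg _

lemma frobNorm_sq {d T : ℕ} (A : Matrix (Fin d) (Fin T) ℝ) :
    frobNorm A ^ 2 = (Aᵀ * A).trace := by
  rw [frobNorm, Real.sq_sqrt (by positivity)]
  rw [Matrix.trace]
  simp only [Matrix.diag_apply, Matrix.mul_apply, Matrix.transpose_apply]
  rw [Finset.sum_comm]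
  simp [pow_two]

attribute [local instance] Matrix.frobeniusNormedAddCommGroup in
lemma frobNorm_eq_norm {d T : ℕ} (A : Matrix (Fin d) (Fin T) ℝ) : frobNorm A = ‖A‖ := by
  rw [Matrix.frobenius_norm_def, frobNorm, Real.sqrt_eq_rpow]
  congr 1
  refine Finset.sum_congr rfl fun i _ => Finset.sum_congr rfl fun j _ => ?_
  rw [Real.rpow_two, Real.norm_eq_abs, sq_abs]

lemma frobNorm_triangle {d T : ℕ} (X Y : Matrix (Fin d) (Fin T) ℝ) :
    frobNorm (X + Y) ≤ frobNorm X + frobNorm Y := by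
  letI := Matrix.frobeniusNormedAddCommGroup (α := ℝ) (m := Fin d) (n := Fin T)
  simpa [frobNorm_eq_norm] using norm_add_le X Y

lemma frobNorm_sub_rev {d T : ℕ} (X Y : Matrix (Fin d) (Fin T) ℝ) :
    frobNorm (X - Y) = frobNorm (Y - X) := by
  letI := Matrix.frobeniusNormedAddCommGroup (α := ℝ) (m := Fin d) (n := Fin T)
  simpa [frobNorm_eq_norm] using norm_sub_rev X Y

lemma opNorm_le_frobNorm {m n : ℕ} (A : Matrix (Fin m) (Fin n) ℝ) : opNorm A ≤ frobNorm A := by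
  refine ContinuousLinearMap.opNorm_le_bound _ (frobNorm_nonneg A) fun x => ?_
  have hxn : ‖x‖ = Real.sqrt (∑ j, (x j) ^ 2) := by
    rw [EuclideanSpace.norm_eq]
    congr 1
    exact Finset.sum_congr rfl fun j _ => by rw [Real.norm_eq_abs, sq_abs]
  have hAx : ‖(LinearMap.toContinuousLinearMap (Matrix.toEuclideanLin A)) x‖
      = Real.sqrt (∑ i, (A.mulVec (fun j => x j) i) ^ 2) := by
    rw [LinearMap.coe_toContinuousLinearMap']
    rw [EuclideanSpace.norm_eq]
    congr 1
    refine Finset.sum_congr rfl fun i _ => ?_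
    rw [Real.norm_eq_abs, sq_abs]
    rfl
  rw [hAx, hxn, frobNorm, ← Real.sqrt_mul (by positivity)]
  apply Real.sqrt_le_sqrt
  rw [Finset.sum_mul]
  refine Finset.sum_le_sum fun i _ => ?_
  simpa [Matrix.mulVec, dotProduct] using
    Finset.sum_mul_sq_le_sq_mul_sq Finset.univ (fun j => A i j) (fun j => x j)

lemma sub_smul_posSemidef {n : ℕ} {A : Matrix (Fin n) (Fin n) ℝ} (hA : A.IsHermitian)
    (c : ℝ) (hc : ∀ i, c ≤ hA.eigenvalues i) : (A - c • 1).PosSemidef := by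
  have h1 : A - c • (1 : Matrix (Fin n) (Fin n) ℝ)
      = (hA.eigenvectorUnitary : Matrix (Fin n) (Fin n) ℝ) *
        Matrix.diagonal (fun i => hA.eigenvalues i - c) *
        (star (hA.eigenvectorUnitary : Matrix (Fin n) (Fin n) ℝ)) := by
    have hU : (hA.eigenvectorUnitary : Matrix (Fin n) (Fin n) ℝ) *
        (star (hA.eigenvectorUnitary : Matrix (Fin n) (Fin n) ℝ)) = 1 :=
      Matrix.mem_unitaryGroup_iff.mp hA.eigenvectorUnitary.2
    have hdiag : Matrix.diagonal (fun i => hA.eigenvalues i - c)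
        = Matrix.diagonal (RCLike.ofReal ∘ hA.eigenvalues) - c • 1 := by
      rw [Matrix.smul_one_eq_diagonal, ← Matrix.diagonal_sub]
      rfl
    rw [hdiag, Matrix.mul_sub, Matrix.sub_mul, Matrix.mul_smul, Matrix.mul_one,
      Matrix.smul_mul, hU]
    conv_lhs => rw [hA.spectral_theorem]
    rfl
  rw [h1]
  exact (Matrix.posSemidef_diagonal_iff.mpr
    fun i => sub_nonneg.mpr (hc i)).mul_mul_conjTranspose_same _

lemma trace_CtC_DtD_nonneg {m n k : ℕ} (C : Matrix (Fin m) (Fin n) ℝ)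
    (D : Matrix (Fin k) (Fin n) ℝ) : 0 ≤ ((Cᵀ * C) * (Dᵀ * D)).trace := by
  have h : ((Cᵀ * C) * (Dᵀ * D)).trace = ((C * Dᵀ)ᵀ * (C * Dᵀ)).trace := by
    calc ((Cᵀ * C) * (Dᵀ * D)).trace = ((Dᵀ * D) * (Cᵀ * C)).trace := Matrix.trace_mul_comm _ _
      _ = ((Dᵀ * ((D * Cᵀ) * C))).trace := by simp only [Matrix.mul_assoc]
      _ = (((D * Cᵀ) * C) * Dᵀ).trace := Matrix.trace_mul_comm _ _
      _ = ((C * Dᵀ)ᵀ * (C * Dᵀ)).trace := by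
          rw [Matrix.transpose_mul, Matrix.transpose_transpose]
          simp only [Matrix.mul_assoc]
  rw [h]
  exact trace_transpose_mul_self_nonneg _

lemma trace_CE {m n k : ℕ} (C : Matrix (Fin m) (Fin n) ℝ) (E : Matrix (Fin n) (Fin k) ℝ) :
    ((C * E)ᵀ * (C * E)).trace = ((Cᵀ * C) * (E * Eᵀ)).trace := by
  calc ((C * E)ᵀ * (C * E)).trace = ((Eᵀ * Cᵀ) * (C * E)).trace := by rw [Matrix.transpose_mul]
    _ = ((C * E) * (Eᵀ * Cᵀ)).trace := Matrix.trace_mul_comm _ _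
    _ = ((C * (E * (Eᵀ * Cᵀ)))).trace := by simp only [Matrix.mul_assoc]
    _ = ((E * (Eᵀ * Cᵀ)) * C).trace := Matrix.trace_mul_comm _ _
    _ = ((E * Eᵀ) * (Cᵀ * C)).trace := by simp only [Matrix.mul_assoc]
    _ = ((Cᵀ * C) * (E * Eᵀ)).trace := Matrix.trace_mul_comm _ _

end MetaAux


open MetaAux in
theorem meta_subspace_angle_bound {d r T : ℕ} (hT : 0 < T)
    (Mstar Mhat Mtil : Matrix (Fin d) (Fin T) ℝ)
    (B Bt : Matrix (Fin d) (Fin r) ℝ) (α αt : Matrix (Fin r) (Fin T) ℝ)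
    (hrank : Mstar.rank = r)
    (hM : Mstar = B * α) (hB : Bᵀ * B = 1)
    (hMt : Mtil = Bt * αt) (hBt : Btᵀ * Bt = 1)
    (hrtil : Mtil.rank ≤ r)
    (hbest : ∀ L : Matrix (Fin d) (Fin T) ℝ, L.rank ≤ r →
      frobNorm (Mtil - Mhat) ≤ frobNorm (L - Mhat))
    (ν : ℝ)
    (hν : ν = r * (minEig (α * αᵀ)
      (by simpa using Matrix.isHermitian_mul_conjTranspose_self α) / T)) :
    (sinTheta B Bt) ^ 2 ≤ 4 * r * (frobNorm (Mhat - Mstar)) ^ 2 / (T * ν) := by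
  classical
  rcases Nat.eq_zero_or_pos r with hr0 | hrpos
  · -- degenerate case r = 0
    subst hr0
    have hs : sinTheta B Bt = 0 := by
      refine le_antisymm ?_ (norm_nonneg _)
      refine ContinuousLinearMap.opNorm_le_bound _ le_rfl fun x => ?_
      rw [LinearMap.coe_toContinuousLinearMap']
      have hz : ∀ i : Fin d, (Matrix.toEuclideanLin ((1 - Bt * Btᵀ) * B) x) i = 0 := by
        intro i
        show ∑ j : Fin 0, (((1 : Matrix (Fin d) (Fin d) ℝ) - Bt * Btᵀ) * B) i j * x j = 0
        simp
      rw [EuclideanSpace.norm_eq]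
      have hsum : (∑ i, ‖(Matrix.toEuclideanLin ((1 - Bt * Btᵀ) * B) x) i‖ ^ 2) = 0 :=
        Finset.sum_eq_zero fun i _ => by rw [hz i]; simp
      rw [hsum, Real.sqrt_zero]
      positivity
    rw [hs]
    norm_num
  -- main case r > 0
  have hHerm : (α * αᵀ).IsHermitian := by
    simpa using Matrix.isHermitian_mul_conjTranspose_self α
  set lam : ℝ := minEig (α * αᵀ) hHerm with hlam
  have hν' : ν = r * (lam / T) := hν
  have hPSD : (α * αᵀ).PosSemidef := by
    simpa using Matrix.posSemidef_self_mul_conjTranspose α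
  have heignn : ∀ i, 0 ≤ hHerm.eigenvalues i := hPSD.eigenvalues_nonneg
  -- rank of α is r
  have hrankα : α.rank = r := by
    refine le_antisymm (α.rank_le_card_height.trans (by simp)) ?_
    calc r = Mstar.rank := hrank.symm
      _ ≤ α.rank := hM ▸ Matrix.rank_mul_le_right B α
  have hrankAA : (α * αᵀ).rank = r := by
    rw [Matrix.rank_self_mul_transpose]; exact hrankα
  have heigpos : ∀ i, 0 < hHerm.eigenvalues i := by
    intro i
    rcases (heignn i).lt_or_eq with h | h
    · exact h
    · exfalso
      have hcard := hHerm.rank_eq_card_non_zero_eigs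
      rw [hrankAA] at hcard
      have hlt : Fintype.card {j // hHerm.eigenvalues j ≠ 0} < Fintype.card (Fin r) :=
        Fintype.card_subtype_lt (x := i) (by simp [← h])
      rw [Fintype.card_fin] at hlt
      omega
  have hne : Nonempty (Fin r) := ⟨⟨0, hrpos⟩⟩
  have hbdd : BddBelow (Set.range hHerm.eigenvalues) :=
    (Set.finite_range _).bddBelow
  have hlampos : 0 < lam := by
    obtain ⟨i0, hi0⟩ := Finite.exists_min hHerm.eigenvalues
    have h1 : hHerm.eigenvalues i0 ≤ lam := by
      rw [hlam, minEig]
      exact le_ciInf hi0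
    exact lt_of_lt_of_le (heigpos i0) h1
  have hlamle : ∀ i, lam ≤ hHerm.eigenvalues i := fun i => ciInf_le hbdd i
  -- the PSD shift
  obtain ⟨D, hD⟩ : ∃ D : Matrix (Fin r) (Fin r) ℝ, α * αᵀ - lam • 1 = Dᴴ * D := by
    open scoped MatrixOrder in
    obtain ⟨D, hD⟩ := CStarAlgebra.nonneg_iff_eq_star_mul_self.mp
      (sub_smul_posSemidef hHerm lam hlamle).nonneg
    exact ⟨D, hD⟩
  rw [show Dᴴ = Dᵀ from rfl] at hD
  clear_value lam
  -- notation
  set P : Matrix (Fin d) (Fin d) ℝ := Bt * Btᵀ with hP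
  set C : Matrix (Fin d) (Fin r) ℝ := (1 - P) * B with hC
  have hsin : sinTheta B Bt = opNorm C := rfl
  -- Step A : lam * trace(CᵀC) ≤ trace((Cα)ᵀ(Cα))
  have hA1 : lam * (Cᵀ * C).trace ≤ ((C * α)ᵀ * (C * α)).trace := by
    have h0 : 0 ≤ ((Cᵀ * C) * (Dᵀ * D)).trace := trace_CtC_DtD_nonneg C D
    have hexp : (Cᵀ * C) * (Dᵀ * D) = (Cᵀ * C) * (α * αᵀ) - lam • (Cᵀ * C) := by
      rw [← hD, Matrix.mul_sub, Matrix.mul_smul, Matrix.mul_one]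
    rw [hexp, Matrix.trace_sub, Matrix.trace_smul, sub_nonneg, smul_eq_mul] at h0
    rw [trace_CE C α]
    exact h0
  -- Step B : Cα = (1-P)(Mstar - Mtil) and contraction
  have hPBt : (1 - P) * Bt = 0 := by
    rw [Matrix.sub_mul, Matrix.one_mul, hP, Matrix.mul_assoc, hBt, Matrix.mul_one, sub_self]
  have h2 : (1 - P) * Mtil = 0 := by
    rw [hMt, ← Matrix.mul_assoc, hPBt, Matrix.zero_mul]
  have hCα : C * α = (1 - P) * (Mstar - Mtil) := by
    rw [Matrix.mul_sub, h2, sub_zero, hM, hC, Matrix.mul_assoc]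
  set X : Matrix (Fin d) (Fin T) ℝ := Mstar - Mtil with hX
  have hPt : Pᵀ = P := by rw [hP, Matrix.transpose_mul, Matrix.transpose_transpose]
  have hPP : P * P = P := by
    rw [hP, Matrix.mul_assoc, ← Matrix.mul_assoc Btᵀ, hBt, Matrix.one_mul]
  have hQ : (1 - P)ᵀ * (1 - P) = 1 - P := by
    rw [Matrix.transpose_sub, Matrix.transpose_one, hPt]
    simp only [Matrix.mul_sub, Matrix.sub_mul, Matrix.mul_one, Matrix.one_mul, hPP]
    abel
  have hB1 : ((C * α)ᵀ * (C * α)).trace ≤ (Xᵀ * X).trace := by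
    rw [hCα]
    have hsplit : ((1 - P) * X)ᵀ * ((1 - P) * X) = Xᵀ * X - Xᵀ * (P * X) := by
      calc ((1 - P) * X)ᵀ * ((1 - P) * X) = Xᵀ * ((1 - P)ᵀ * ((1 - P) * X)) := by
            rw [Matrix.transpose_mul]; simp only [Matrix.mul_assoc]
        _ = Xᵀ * ((1 - P) * X) := by rw [← Matrix.mul_assoc (1 - P)ᵀ, hQ]
        _ = Xᵀ * X - Xᵀ * (P * X) := by
            rw [Matrix.sub_mul, Matrix.one_mul, Matrix.mul_sub]
    rw [hsplit, Matrix.trace_sub, sub_le_self_iff]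
    have hPX : Xᵀ * (P * X) = (Btᵀ * X)ᵀ * (Btᵀ * X) := by
      rw [Matrix.transpose_mul, Matrix.transpose_transpose, hP]
      simp only [Matrix.mul_assoc]
    rw [hPX]
    exact trace_transpose_mul_self_nonneg _
  -- Step C : triangle inequality
  have htri : frobNorm X ≤ 2 * frobNorm (Mhat - Mstar) := by
    have h1 : frobNorm (Mtil - Mhat) ≤ frobNorm (Mstar - Mhat) := hbest Mstar (le_of_eq hrank)
    have h2 : frobNorm X ≤ frobNorm (Mstar - Mhat) + frobNorm (Mhat - Mtil) := by
      have := frobNorm_triangle (Mstar - Mhat) (Mhat - Mtil)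
      rwa [sub_add_sub_cancel] at this
    have h3 : frobNorm (Mstar - Mhat) = frobNorm (Mhat - Mstar) := frobNorm_sub_rev _ _
    have h4 : frobNorm (Mhat - Mtil) = frobNorm (Mtil - Mhat) := frobNorm_sub_rev _ _
    linarith
  -- Assemble
  have hs_nonneg : 0 ≤ sinTheta B Bt := norm_nonneg _
  have hopC : sinTheta B Bt ≤ frobNorm C := hsin ▸ opNorm_le_frobNorm C
  have e1 : sinTheta B Bt ^ 2 ≤ frobNorm C ^ 2 := by
    exact pow_le_pow_left₀ hs_nonneg hopC 2
  have e2 : frobNorm C ^ 2 * lam ≤ (Xᵀ * X).trace := by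
    rw [frobNorm_sq, mul_comm]
    exact hA1.trans hB1
  have e3 : (Xᵀ * X).trace ≤ 4 * frobNorm (Mhat - Mstar) ^ 2 := by
    rw [← frobNorm_sq]
    have := pow_le_pow_left₀ (frobNorm_nonneg X) htri 2
    nlinarith [frobNorm_nonneg (Mhat - Mstar)]
  have key : sinTheta B Bt ^ 2 * lam ≤ 4 * frobNorm (Mhat - Mstar) ^ 2 := by
    have : sinTheta B Bt ^ 2 * lam ≤ frobNorm C ^ 2 * lam :=
      mul_le_mul_of_nonneg_right e1 hlampos.le
    linarith
  -- final arithmetic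
  have hTne : (T : ℝ) ≠ 0 := Nat.cast_ne_zero.mpr hT.ne'
  have hrpos' : (0 : ℝ) < r := Nat.cast_pos.mpr hrpos
  have hTν : (T : ℝ) * ν = r * lam := by
    rw [hν']; field_simp
  rw [hTν, le_div_iff₀ (by positivity)]
  have h6 : sinTheta B Bt ^ 2 * (↑r * lam) = ↑r * (sinTheta B Bt ^ 2 * lam) := by ring
  have h7 : (r : ℝ) * (sinTheta B Bt ^ 2 * lam) ≤ (r : ℝ) * (4 * frobNorm (Mhat - Mstar) ^ 2) :=
    mul_le_mul_of_nonneg_left key hrpos'.le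
  rw [h6]
  calc (r : ℝ) * (sinTheta B Bt ^ 2 * lam) ≤ (r : ℝ) * (4 * frobNorm (Mhat - Mstar) ^ 2) := h7
    _ = 4 * ↑r * frobNorm (Mhat - Mstar) ^ 2 := by ring
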